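/- The operator (1/2) Id + T is invertible with inverse given by Id − R + 2 P_Δ; that is, ((1/2) Id + T)(Id − R + 2 P_Δ) = Id and (Id − R + 2 P_Δ)((1/2) Id + T) = Id. -/

import Mathlib

open scoped RealInnerProductSpace
open Finset
open Fin.NatCast

private lemma tele' {X : Type*} [AddCommGroup X] [Module ℝ X] (c : ℝ) (g : ℕ → X) :
    ∀ n : ℕ, 1 ≤ n → ∑ k ∈ Icc 1 n, (c - 2*(k:ℝ)) • (g k - g (k+1)) =
      (c-2) • g 1 - (c - 2*(n:ℝ)) • g (n+1) - (2:ℝ) • ∑ k ∈ Icc 2 n, g k := by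
  intro n hn
  induction n with
  | zero => omega
  | succ n ih =>
    rcases Nat.lt_or_ge n 1 with h | h
    · interval_cases n
      simp only [Icc_self, sum_singleton]
      norm_num
      module
    · rw [Finset.sum_Icc_succ_top (by omega : 1 ≤ n+1), ih h,
        Finset.sum_Icc_succ_top (by omega : 2 ≤ n+1)]
      push_cast
      module

private lemma coefsum' (c : ℝ) : ∀ n : ℕ, ∑ k ∈ Icc 1 n, (c - 2*(k:ℝ)) = n*(c - (n+1)) := by
  intro n
  induction n with
  | zero => simp
  | succ n ih =>
    rw [Finset.sum_Icc_succ_top (by omega : 1 ≤ n+1), ih]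
    push_cast
    ring

private lemma powR' {X : Type*} [NormedAddCommGroup X] [InnerProductSpace ℝ X]
    {m : ℕ} [NeZero m]
    (R : PiLp 2 (fun _ : Fin m => X) →L[ℝ] PiLp 2 (fun _ : Fin m => X))
    (hR : ∀ (x : PiLp 2 (fun _ : Fin m => X)) (i : Fin m), R x i = x (i - 1))
    (k : ℕ) (x : PiLp 2 (fun _ : Fin m => X)) (i : Fin m) :
    (R ^ k) x i = x (i - (k : Fin m)) := by
  induction k generalizing i with
  | zero => rw [Nat.cast_zero, sub_zero]; rfl
  | succ k ih =>
    rw [pow_succ', ContinuousLinearMap.mul_apply, hR, ih]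
    refine congrArg x.ofLp ?_
    push_cast
    abel

private lemma projP' {X : Type*} [NormedAddCommGroup X] [InnerProductSpace ℝ X]
    {m : ℕ} [NeZero m]
    (Δ : Submodule ℝ (PiLp 2 (fun _ : Fin m => X)))
    (hΔ : ∀ x, x ∈ Δ ↔ ∃ c : X, ∀ i, x i = c)
    (P : PiLp 2 (fun _ : Fin m => X) →L[ℝ] PiLp 2 (fun _ : Fin m => X))
    (hP : ∀ x, P x ∈ Δ ∧ x - P x ∈ Δᗮ)
    (x : PiLp 2 (fun _ : Fin m => X)) (i : Fin m) :
    P x i = (m : ℝ)⁻¹ • ∑ j : Fin m, x j := by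
  obtain ⟨c, hc⟩ := (hΔ (P x)).1 (hP x).1
  have hm0 : (m : ℝ) ≠ 0 := Nat.cast_ne_zero.2 (NeZero.ne m)
  have key : ∑ j : Fin m, x j = (m : ℝ) • c := by
    set w : X := ∑ j : Fin m, x j - (m : ℝ) • c with hw
    set v : PiLp 2 (fun _ : Fin m => X) := WithLp.toLp 2 (fun _ => w) with hv
    have hvΔ : v ∈ Δ := (hΔ v).2 ⟨w, fun _ => rfl⟩
    have horth := (hP x).2 v hvΔ
    have hinner : ⟪v, x - P x⟫ = ∑ j : Fin m, ⟪w, x j - c⟫ := by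
      rw [PiLp.inner_apply]
      refine Finset.sum_congr rfl fun j _ => ?_
      simp [hv, hc j]
    rw [hinner] at horth
    have h2 : ∑ j : Fin m, ⟪w, x j - c⟫ = ⟪w, ∑ j : Fin m, (x j - c)⟫ := (inner_sum _ _ _).symm
    have h3 : ∑ j : Fin m, (x j - c) = w := by
      rw [Finset.sum_sub_distrib, hw]
      congr 1
      simp [Finset.sum_const, ← Nat.cast_smul_eq_nsmul ℝ]
    rw [h2, h3] at horth
    have hw0 : w = 0 := inner_self_eq_zero.1 horth
    rw [hw] at hw0
    exact sub_eq_zero.1 hw0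
  rw [hc i, key, smul_smul, inv_mul_cancel₀ hm0, one_smul]


private lemma hreidx' {m : ℕ} [NeZero m] {M : Type*} [AddCommMonoid M] (x : Fin m → M)
    (k : Fin m) : ∑ j : Fin m, x (j - k) = ∑ j : Fin m, x j :=
  Fintype.sum_equiv (Equiv.subRight k) _ _ (fun j => rfl)

private lemma hrange' {m : ℕ} [NeZero m] {M : Type*} [AddCommMonoid M] (x : Fin m → M)
    (i : Fin m) : ∑ k ∈ range m, x (i - (k : Fin m)) = ∑ j : Fin m, x j := by
  rw [← Fin.sum_univ_eq_sum_range (fun k => x (i - (k : Fin m))) m]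
  simp only [Fin.cast_val_eq_self]
  exact Fintype.sum_equiv (Equiv.subLeft i) _ _ (fun j => rfl)

theorem stmt8 {X : Type*} [NormedAddCommGroup X] [InnerProductSpace ℝ X] [CompleteSpace X]
    (m : ℕ) [NeZero m] (hm : 2 ≤ m)
    (R : PiLp 2 (fun _ : Fin m => X) →L[ℝ] PiLp 2 (fun _ : Fin m => X))
    (hR : ∀ (x : PiLp 2 (fun _ : Fin m => X)) (i : Fin m), R x i = x (i - 1))
    (Δ : Submodule ℝ (PiLp 2 (fun _ : Fin m => X)))
    (hΔ : ∀ x, x ∈ Δ ↔ ∃ c : X, ∀ i, x i = c)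
    (P : PiLp 2 (fun _ : Fin m => X) →L[ℝ] PiLp 2 (fun _ : Fin m => X))
    (hP : ∀ x, P x ∈ Δ ∧ x - P x ∈ Δᗮ)
    (T : PiLp 2 (fun _ : Fin m => X) →L[ℝ] PiLp 2 (fun _ : Fin m => X))
    (hT : T = (2 * (m : ℝ))⁻¹ •
      ∑ k ∈ Finset.Icc 1 (m - 1), ((m : ℝ) - 2 * (k : ℝ)) • R ^ k) :
    ((1 / 2 : ℝ) • (1 : PiLp 2 (fun _ : Fin m => X) →L[ℝ] PiLp 2 (fun _ : Fin m => X)) + T)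
        * (1 - R + (2 : ℝ) • P) = 1 ∧
    (1 - R + (2 : ℝ) • P) *
        ((1 / 2 : ℝ) • (1 : PiLp 2 (fun _ : Fin m => X) →L[ℝ] PiLp 2 (fun _ : Fin m => X)) + T)
      = 1 := by
  have hm0 : (m : ℝ) ≠ 0 := Nat.cast_ne_zero.2 (NeZero.ne m)
  have hTapp : ∀ (y : PiLp 2 (fun _ : Fin m => X)) (i : Fin m),
      T y i = (2 * (m : ℝ))⁻¹ • ∑ k ∈ Icc 1 (m-1), ((m:ℝ) - 2*(k:ℝ)) • y (i - (k : Fin m)) := by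
    intro y i
    rw [hT]
    simp only [ContinuousLinearMap.smul_apply, ContinuousLinearMap.sum_apply,
      PiLp.smul_apply]
    rw [WithLp.ofLp_sum, Finset.sum_apply]
    congr 1
    exact Finset.sum_congr rfl fun k _ => by rw [PiLp.smul_apply, powR' R hR]
  have hcoef : ∑ k ∈ Icc 1 (m-1), ((m:ℝ) - 2*(k:ℝ)) = 0 := by
    rw [coefsum']
    have h1 : ((m-1 : ℕ) : ℝ) = (m:ℝ) - 1 := by
      rw [Nat.cast_sub (by omega)]; norm_num
    rw [h1]; ring
  have hsub : ∀ (i : Fin m) (k : ℕ), (i - (k : Fin m)) - 1 = i - ((k+1 : ℕ) : Fin m) := by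
    intro i k
    push_cast
    abel
  have hreidx : ∀ (x : PiLp 2 (fun _ : Fin m => X)) (k : Fin m),
      ∑ j : Fin m, x (j - k) = ∑ j : Fin m, x j := fun x k => hreidx' (M := X) x k
  have hrange : ∀ (x : PiLp 2 (fun _ : Fin m => X)) (i : Fin m),
      ∑ k ∈ range m, x (i - (k : Fin m)) = ∑ j : Fin m, x j := fun x i => hrange' (M := X) x i
  have hrsplit : (range m : Finset ℕ) = insert 0 (insert 1 (Icc 2 (m-1))) := by
    ext k
    simp only [mem_range, mem_insert, mem_Icc]
    omega
  have hsplit : ∀ (x : PiLp 2 (fun _ : Fin m => X)) (i : Fin m),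
      ∑ j : Fin m, x j = x i + x (i - 1) + ∑ k ∈ Icc 2 (m-1), x (i - (k : Fin m)) := by
    intro x i
    rw [← hrange x i, hrsplit, Finset.sum_insert (by simp [mem_Icc]),
      Finset.sum_insert (by simp [mem_Icc])]
    rw [Nat.cast_zero, sub_zero, Nat.cast_one]
    abel
  have hmm : ((m - 1 : ℕ) : ℝ) = (m:ℝ) - 1 := by rw [Nat.cast_sub (by omega)]; norm_num
  have hm11 : m - 1 + 1 = m := by omega
  constructor
  · refine ContinuousLinearMap.ext fun x => ?_
    refine PiLp.ext fun i => ?_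
    have hgtop : x (i - ((m - 1 + 1 : ℕ) : Fin m)) = x i := by
      rw [hm11, Fin.natCast_self, sub_zero]
    have hg1 : x (i - ((1:ℕ) : Fin m)) = x (i - 1) := by rw [Nat.cast_one]
    have htele := tele' (m:ℝ) (fun k => x (i - (k:Fin m))) (m-1) (by omega)
    beta_reduce at htele
    rw [hgtop, hg1, hmm] at htele
    have hyapp : ∀ j : Fin m, ((1 - R + (2:ℝ) • P) x) j
        = x j - x (j - 1) + (2:ℝ) • ((m:ℝ)⁻¹ • ∑ j' : Fin m, x j') := by
      intro j
      simp only [ContinuousLinearMap.add_apply, ContinuousLinearMap.sub_apply,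
        ContinuousLinearMap.smul_apply, ContinuousLinearMap.one_apply,
        PiLp.add_apply, PiLp.sub_apply, PiLp.smul_apply, hR, projP' Δ hΔ P hP]
    show (1/2 : ℝ) • ((1 - R + (2:ℝ) • P) x) i + T ((1 - R + (2:ℝ) • P) x) i = x i
    rw [hTapp]
    have hterm : ∀ k ∈ Icc 1 (m-1), ((m:ℝ) - 2*(k:ℝ)) • ((1 - R + (2:ℝ)•P) x) (i - (k:Fin m)) =
        ((m:ℝ) - 2*(k:ℝ)) • ((x (i - (k:Fin m)) - x (i - ((k+1:ℕ):Fin m)))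
          + (2:ℝ) • ((m:ℝ)⁻¹ • ∑ j' : Fin m, x j')) := by
      intro k _
      rw [hyapp, hsub i k]
    rw [Finset.sum_congr rfl hterm, hyapp i]
    simp only [smul_add, Finset.sum_add_distrib]
    rw [← Finset.sum_smul, hcoef, zero_smul, smul_zero, add_zero, htele, hsplit x i]
    match_scalars <;> field_simp <;> ring
  · refine ContinuousLinearMap.ext fun x => ?_
    refine PiLp.ext fun i => ?_
    have hgtop : x (i - ((m - 1 + 1 : ℕ) : Fin m)) = x i := by
      rw [hm11, Fin.natCast_self, sub_zero]
    have hg1 : x (i - ((1:ℕ) : Fin m)) = x (i - 1) := by rw [Nat.cast_one]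
    have htele := tele' (m:ℝ) (fun k => x (i - (k:Fin m))) (m-1) (by omega)
    beta_reduce at htele
    rw [hgtop, hg1, hmm] at htele
    set z : PiLp 2 (fun _ : Fin m => X) :=
      ((1/2 : ℝ) • (1 : PiLp 2 (fun _ : Fin m => X) →L[ℝ] PiLp 2 (fun _ : Fin m => X)) + T) x
      with hz
    have hzapp : ∀ j : Fin m, z j = (1/2 : ℝ) • x j
        + (2 * (m : ℝ))⁻¹ • ∑ k ∈ Icc 1 (m-1), ((m:ℝ) - 2*(k:ℝ)) • x (j - (k : Fin m)) := by
      intro j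
      simp only [hz, ContinuousLinearMap.add_apply, ContinuousLinearMap.smul_apply,
        ContinuousLinearMap.one_apply, PiLp.add_apply, PiLp.smul_apply, hTapp]
    have hzsum : ∑ j : Fin m, z j = (1/2 : ℝ) • ∑ j : Fin m, x j := by
      have h1 : ∀ j : Fin m, z j = (1/2 : ℝ) • x j
          + ∑ k ∈ Icc 1 (m-1), (2 * (m : ℝ))⁻¹ • (((m:ℝ) - 2*(k:ℝ)) • x (j - (k : Fin m))) := by
        intro j
        rw [hzapp j, Finset.smul_sum]
      rw [Finset.sum_congr rfl (fun j _ => h1 j), Finset.sum_add_distrib,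
        ← Finset.smul_sum, Finset.sum_comm]
      have h0 : ∑ k ∈ Icc 1 (m-1), ∑ j : Fin m,
          (2 * (m : ℝ))⁻¹ • (((m:ℝ) - 2*(k:ℝ)) • x (j - (k : Fin m))) = 0 := by
        have h2 : ∀ k ∈ Icc 1 (m-1), ∑ j : Fin m,
            (2 * (m : ℝ))⁻¹ • (((m:ℝ) - 2*(k:ℝ)) • x (j - (k : Fin m)))
            = ((2 * (m : ℝ))⁻¹ * ((m:ℝ) - 2*(k:ℝ))) • ∑ j : Fin m, x j := by
          intro k _
          rw [← Finset.smul_sum, ← Finset.smul_sum, hreidx x, smul_smul]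
        rw [Finset.sum_congr rfl h2, ← Finset.sum_smul, ← Finset.mul_sum, hcoef]
        simp
      rw [h0, add_zero]
    have hshift : ∑ k ∈ Icc 1 (m-1), ((m:ℝ) - 2*(k:ℝ)) • x ((i - 1) - (k : Fin m)) =
        ∑ k ∈ Icc 1 (m-1), ((m:ℝ) - 2*(k:ℝ)) • x (i - ((k+1:ℕ) : Fin m)) := by
      refine Finset.sum_congr rfl fun k _ => ?_
      refine congrArg (fun j => ((m:ℝ) - 2*(k:ℝ)) • x j) ?_
      rw [← hsub i k]
      push_cast
      abel
    have hcomb : ∑ k ∈ Icc 1 (m-1), ((m:ℝ) - 2*(k:ℝ)) • x (i - (k : Fin m))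
        - ∑ k ∈ Icc 1 (m-1), ((m:ℝ) - 2*(k:ℝ)) • x (i - ((k+1:ℕ) : Fin m))
        = ∑ k ∈ Icc 1 (m-1), ((m:ℝ) - 2*(k:ℝ))
            • (x (i - (k : Fin m)) - x (i - ((k+1:ℕ) : Fin m))) := by
      rw [← Finset.sum_sub_distrib]
      exact Finset.sum_congr rfl fun k _ => (smul_sub _ _ _).symm
    have hdiff : z i - z (i - 1) = (1/2:ℝ) • x i - (1/2:ℝ) • x (i-1)
        + (2*(m:ℝ))⁻¹ • ∑ k ∈ Icc 1 (m-1), ((m:ℝ) - 2*(k:ℝ))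
            • (x (i - (k:Fin m)) - x (i - ((k+1:ℕ):Fin m))) := by
      rw [hzapp i, hzapp (i-1), hshift, ← hcomb, smul_sub]
      abel
    have happ : ((1 - R + (2:ℝ) • P) z) i = z i - z (i - 1) + (2:ℝ) • P z i := by
      simp only [ContinuousLinearMap.add_apply, ContinuousLinearMap.sub_apply,
        ContinuousLinearMap.smul_apply, ContinuousLinearMap.one_apply,
        PiLp.add_apply, PiLp.sub_apply, PiLp.smul_apply, hR]
    show ((1 - R + (2:ℝ) • P) z) i = x i
    rw [happ, hdiff, htele, projP' Δ hΔ P hP, hzsum, hsplit x i]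
    match_scalars <;> field_simp <;> ring
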